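/- In a weakly Markov category, the action of the group C(X, I) on the hom-set C(X, Y) is free: if a · f = f for some effect a : X → I and morphism f : X → Y, then a = del_X. More generally, if a · f = g then a = (del_Y ∘ f)⁻¹ · (del_Y ∘ g), so a is uniquely determined by f and g. -/

import Mathlib

open CategoryTheory MonoidalCategory

universe v u

/-- A gs-monoidal category: a symmetric monoidal category in which every
object carries a commutative comonoid structure (copy, discard), compatible
with the monoidal structure. -/
class GSMonoidal (C : Type u) [Category.{v} C] [MonoidalCategory C]
    [SymmetricCategory C] where
  copy : ∀ X : C, X ⟶ X ⊗ X
  del : ∀ X : C, X ⟶ 𝟙_ C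
  copy_del_left : ∀ X : C, copy X ≫ (del X ▷ X) ≫ (λ_ X).hom = 𝟙 X
  copy_del_right : ∀ X : C, copy X ≫ (X ◁ del X) ≫ (ρ_ X).hom = 𝟙 X
  copy_assoc : ∀ X : C,
    copy X ≫ (copy X ▷ X) ≫ (α_ X X X).hom = copy X ≫ (X ◁ copy X)
  copy_comm : ∀ X : C, copy X ≫ (β_ X X).hom = copy X
  copy_tensor : ∀ X Y : C,
    copy (X ⊗ Y) = (copy X ⊗ₘ copy Y) ≫ tensorμ X X Y Y
  del_tensor : ∀ X Y : C, del (X ⊗ Y) = (del X ⊗ₘ del Y) ≫ (λ_ (𝟙_ C)).hom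
  copy_unit : copy (𝟙_ C) = (λ_ (𝟙_ C)).inv
  del_unit : del (𝟙_ C) = 𝟙 (𝟙_ C)

namespace GSMonoidal

variable {C : Type u} [Category.{v} C] [MonoidalCategory C]
  [SymmetricCategory C] [GSMonoidal C]

/-- The convolution product on effects `a b : X ⟶ I`:
`(a, b) ↦ copy_X ≫ (a ⊗ b) ≫ (I ⊗ I ≅ I)`. -/
def emul {X : C} (a b : X ⟶ 𝟙_ C) : X ⟶ 𝟙_ C :=
  copy X ≫ (a ⊗ₘ b) ≫ (λ_ (𝟙_ C)).hom

/-- The action of the effect monoid `C(X, I)` on the hom-set `C(X, Y)`: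
`a · f = copy_X ≫ (a ⊗ f) ≫ (λ_ Y)`. -/
def act {X Y : C} (a : X ⟶ 𝟙_ C) (f : X ⟶ Y) : X ⟶ Y :=
  copy X ≫ (a ⊗ₘ f) ≫ (λ_ Y).hom

end GSMonoidal

/-- A weakly Markov category: a gs-monoidal category in which every effect
monoid `C(X, I)` is a group. -/
class WeaklyMarkov (C : Type u) [Category.{v} C] [MonoidalCategory C]
    [SymmetricCategory C] extends GSMonoidal C where
  einv : ∀ {X : C}, (X ⟶ 𝟙_ C) → (X ⟶ 𝟙_ C)
  emul_einv : ∀ {X : C} (a : X ⟶ 𝟙_ C), GSMonoidal.emul a (einv a) = del X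
  einv_emul : ∀ {X : C} (a : X ⟶ 𝟙_ C), GSMonoidal.emul (einv a) a = del X


namespace GSMonoidal

variable {C : Type u} [Category.{v} C] [MonoidalCategory C]
  [SymmetricCategory C] [GSMonoidal C]

lemma emul_eq_act {X : C} (a b : X ⟶ 𝟙_ C) : emul a b = act a b := rfl

lemma act_comp {X Y Z : C} (a : X ⟶ 𝟙_ C) (f : X ⟶ Y) (k : Y ⟶ Z) :
    act a f ≫ k = act a (f ≫ k) := by
  simp [act, MonoidalCategory.tensorHom_def]

lemma act_del_right {X : C} (a : X ⟶ 𝟙_ C) : act a (del X) = a := by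
  have h := copy_del_right X
  have h2 : copy X ≫ X ◁ del X = (ρ_ X).inv := by
    rw [← cancel_mono (ρ_ X).hom]; simpa using h
  simp only [act, tensorHom_def', ← Category.assoc, h2]
  simp [unitors_equal]

lemma act_del_left {X : C} (a : X ⟶ 𝟙_ C) : act (del X) a = a := by
  have h := copy_del_left X
  have h2 : copy X ≫ del X ▷ X = (λ_ X).inv := by
    rw [← cancel_mono (λ_ X).hom]; simpa using h
  simp only [act, MonoidalCategory.tensorHom_def, ← Category.assoc, h2]
  simp

lemma act_act {X Y : C} (a b : X ⟶ 𝟙_ C) (f : X ⟶ Y) :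
    act a (act b f) = act (emul a b) f := by
  calc act a (act b f)
      = copy X ≫ X ◁ act b f ≫ a ▷ Y ≫ (λ_ Y).hom := by
        simp [act, tensorHom_def']
    _ = copy X ≫ X ◁ copy X ≫ X ◁ (b ⊗ₘ f) ≫ X ◁ (λ_ Y).hom ≫ a ▷ Y ≫ (λ_ Y).hom := by
        simp [act]
    _ = copy X ≫ copy X ▷ X ≫ (α_ X X X).hom ≫ X ◁ (b ⊗ₘ f) ≫ X ◁ (λ_ Y).hom ≫
          a ▷ Y ≫ (λ_ Y).hom := by
        slice_lhs 1 2 => rw [← copy_assoc]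
        simp
    _ = copy X ≫ copy X ▷ X ≫ (α_ X X X).hom ≫ (a ⊗ₘ (b ⊗ₘ f)) ≫
          𝟙_ C ◁ (λ_ Y).hom ≫ (λ_ Y).hom := by
        simp only [tensorHom_def', Category.assoc, whisker_exchange_assoc]
    _ = copy X ≫ copy X ▷ X ≫ ((a ⊗ₘ b) ⊗ₘ f) ≫ (α_ (𝟙_ C) (𝟙_ C) Y).hom ≫
          𝟙_ C ◁ (λ_ Y).hom ≫ (λ_ Y).hom := by
        rw [← associator_naturality_assoc]
    _ = copy X ≫ copy X ▷ X ≫ ((a ⊗ₘ b) ⊗ₘ f) ≫ (λ_ (𝟙_ C)).hom ▷ Y ≫ (λ_ Y).hom := by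
        rw [triangle_assoc, unitors_equal]
    _ = copy X ≫ copy X ▷ X ≫ (a ⊗ₘ b) ▷ X ≫ (λ_ (𝟙_ C)).hom ▷ X ≫ 𝟙_ C ◁ f ≫
          (λ_ Y).hom := by
        simp only [MonoidalCategory.tensorHom_def, Category.assoc, whisker_exchange_assoc]
    _ = act (emul a b) f := by
        simp [act, emul, MonoidalCategory.tensorHom_def]

lemma emul_comm {X : C} (a b : X ⟶ 𝟙_ C) : emul a b = emul b a := by
  conv_lhs => rw [emul, ← copy_comm X, Category.assoc,
    ← BraidedCategory.braiding_naturality_assoc]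
  rw [emul]
  congr 1
  congr 1
  rw [braiding_leftUnitor, unitors_equal]

end GSMonoidal

open GSMonoidal WeaklyMarkov in
/-- In a weakly Markov category, the action of the group `C(X, I)` on
`C(X, Y)` is free: if `a · f = f` then `a = del_X`; more generally, if
`a · f = g` then `a = (del_Y ∘ f)⁻¹ · (del_Y ∘ g)`, so `a` is uniquely
determined by `f` and `g`. -/
theorem stmt8 {C : Type u} [Category.{v} C] [MonoidalCategory C]
    [SymmetricCategory C] [WeaklyMarkov C] {X Y : C} :
    (∀ (a : X ⟶ 𝟙_ C) (f : X ⟶ Y), act a f = f → a = del X) ∧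
    (∀ (a : X ⟶ 𝟙_ C) (f g : X ⟶ Y), act a f = g →
      a = emul (einv (f ≫ del Y)) (g ≫ del Y)) := by
  have key : ∀ (a : X ⟶ 𝟙_ C) (f g : X ⟶ Y), act a f = g →
      a = emul (einv (f ≫ del Y)) (g ≫ del Y) := by
    intro a f g h
    have h1 : emul a (f ≫ del Y) = g ≫ del Y := by
      rw [emul_eq_act, ← act_comp, h]
    rw [← h1, emul_eq_act (einv (f ≫ del Y)), emul_eq_act a, act_act,
      emul_comm, ← act_act]
    have h2 : act (einv (f ≫ del Y)) (f ≫ del Y) = del X := by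
      rw [← emul_eq_act]; exact einv_emul _
    rw [h2, act_del_right]
  refine ⟨?_, key⟩
  intro a f h
  rw [key a f f h]
  have h2 : emul (einv (f ≫ del Y)) (f ≫ del Y) = del X := einv_emul _
  exact h2
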